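/- Let w, r, s ∈ ℕ. If s ≥ wr then μ(w,r,s) = |Δ^w_r| = C(r+w, r) and σ(C(r+w,r), w, r) = wr. If s < wr then σ(μ(w,r,s), w, r) = s. -/
import Mathlib


open scoped BigOperators Classical
open Filter

namespace TandemDup

variable {S : Type} [Fintype S] [DecidableEq S] [Ring S]

/-- A single tandem duplication with window length `k`:
`a = xyz` with `|y| = k` is mapped to `b = xyyz`. -/
def Dup (k : ℕ) (a b : List S) : Prop :=
  ∃ x y z : List S, y.length = k ∧ a = x ++ y ++ z ∧ b = x ++ y ++ y ++ z

/-- `DescN k t x y` : `y` is a `t`-descendant of `x`. -/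
def DescN (k : ℕ) : ℕ → List S → List S → Prop
  | 0, a, b => a = b
  | t + 1, a, b => ∃ c, DescN k t a c ∧ Dup k c b

/-- The set `D^t(x)` of `t`-descendants of `x`. -/
def DSet (k t : ℕ) (x : List S) : Set (List S) := {y | DescN k t x y}

/-- The descendant cone `D^*(x)`. -/
def DStar (k : ℕ) (x : List S) : Set (List S) := ⋃ t : ℕ, DSet k t x

/-- A string of length at least `k` is irreducible if it has no ancestor other than itself. -/
def Irred (k : ℕ) (x : List S) : Prop :=
  k ≤ x.length ∧ ∀ z : List S, x ∈ DStar k z → z = x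

/-- The duplication root `rt(y)`: an irreducible ancestor of `y` (unique, by the theory). -/
noncomputable def rt (k : ℕ) (y : List S) : List S :=
  if h : ∃ x : List S, Irred k x ∧ y ∈ DStar k x then h.choose else y

/-- The (non-anchor part of the) discrete derivative `φ̄(x)`. -/
def phiBar (k : ℕ) (x : List S) : List S :=
  (List.range (x.length - k)).map (fun i => x.getD (i + k) 0 - x.getD i 0)

/-- Hamming weight of a string: the number of its nonzero letters. -/
def wtH (l : List S) : ℕ := (l.filter (fun a => decide (a ≠ 0))).length

/-- `w(x) := wt_H(φ̄(x))`. -/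
def wgt (k : ℕ) (x : List S) : ℕ := wtH (phiBar k x)

/-- `r(x) := (|x| - |rt(x)|)/k`, the number of duplications taking `rt(x)` to `x`. -/
noncomputable def rr (k : ℕ) (x : List S) : ℕ := (x.length - (rt k x).length) / k

/-- The typicality condition on the weight `w`. -/
def wTypical (q k n w : ℕ) : Prop :=
  |(w : ℝ) - (((q : ℝ) - 1) / (q : ℝ)) * ((n : ℝ) - (k : ℝ))| < (n : ℝ) ^ ((3 : ℝ) / 4)

/-- The typicality condition on the number of duplications `r`. -/
def rTypical (q k n r : ℕ) : Prop :=
  |(r : ℝ) - (((q : ℝ) - 1) / ((q : ℝ) * ((q : ℝ) ^ k - 1))) * ((n : ℝ) - (k : ℝ))|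
    < 2 * (n : ℝ) ^ ((3 : ℝ) / 4)

/-- The typical set `typ^n`. -/
def typ (k n : ℕ) : Set (List S) :=
  {x | x.length = n ∧ wTypical (Fintype.card S) k n (wgt k x) ∧
    rTypical (Fintype.card S) k n (rr k x)}

/-- The uncertainty `N_t(m, C)`: the maximal size of `⋂ᵢ D^t(xᵢ)` over pairwise
distinct `x₁, …, x_m ∈ C`. -/
noncomputable def Nt (k t m : ℕ) (C : Set (List S)) : ℕ :=
  sSup { N : ℕ | ∃ f : Fin m → List S, Function.Injective f ∧ (∀ i, f i ∈ C) ∧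
    N = (⋂ i, DSet k t (f i)).ncard }

/-- `S̄_t(u₁, …, u_m) = ⋂ᵢ {v : v ≥ uᵢ, ‖v - uᵢ‖₁ = t}`. -/
def Sbar (w t : ℕ) {m : ℕ} (u : Fin m → (Fin (w + 1) → ℕ)) : Set (Fin (w + 1) → ℕ) :=
  ⋂ i, {v | u i ≤ v ∧ ∑ j, (v j - u i j) = t}

/-- `N̄_t(m, w, r)`. -/
noncomputable def Nbar (t m w r : ℕ) : ℕ :=
  sSup { N : ℕ | ∃ u : Fin m → (Fin (w + 1) → ℕ), Function.Injective u ∧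
    (∀ i, ∑ j, u i j = r) ∧ N = (Sbar w t u).ncard }

/-- The minimum supremum height `σ(m, w, r)`. -/
noncomputable def sigma (m w r : ℕ) : ℕ :=
  sInf { s : ℕ | ∃ u : Fin m → (Fin (w + 1) → ℕ), Function.Injective u ∧
    (∀ i, ∑ j, u i j = r) ∧ (∑ j, Finset.univ.sup fun i => u i j) = r + s }

/-- The lower-bounds set `A_r(u)`. -/
def lbs (w r : ℕ) (u : Fin (w + 1) → ℕ) : Set (Fin (w + 1) → ℕ) :=
  {v | (∑ j, v j) = r ∧ v ≤ u}

/-- The maximal lower-bounds-set size `μ(w, r, s)`. -/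
noncomputable def mu (w r s : ℕ) : ℕ :=
  sSup { N : ℕ | ∃ u : Fin (w + 1) → ℕ, (∑ j, u j) = r + s ∧ N = (lbs w r u).ncard }

/-- Twice the distance `d₁`, i.e. the `ℓ₁`-distance `‖u - v‖₁` on `ℕ^{w+1}`. -/
def l1dist {w : ℕ} (u v : Fin (w + 1) → ℕ) : ℕ :=
  ∑ j, ((u j - v j) + (v j - u j))

/-- `N̄_t(m, w, r, d)`. -/
noncomputable def NbarD (t m w r d : ℕ) : ℕ :=
  sSup { N : ℕ | ∃ u : Fin m → (Fin (w + 1) → ℕ),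
    (∀ i, ∑ j, u i j = r) ∧ (∀ i j, i ≠ j → 2 * d ≤ l1dist (u i) (u j)) ∧
    N = (Sbar w t u).ncard }

/-- `σ(m, w, r, d)`. -/
noncomputable def sigmaD (m w r d : ℕ) : ℕ :=
  sInf { s : ℕ | ∃ u : Fin m → (Fin (w + 1) → ℕ),
    (∀ i, ∑ j, u i j = r) ∧ (∀ i j, i ≠ j → 2 * d ≤ l1dist (u i) (u j)) ∧
    (∑ j, Finset.univ.sup fun i => u i j) = r + s }

/-- `μ(w, r, s, d)`. -/
noncomputable def muD (w r s d : ℕ) : ℕ :=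
  sSup { N : ℕ | ∃ u : Fin (w + 1) → ℕ, (∑ j, u j) = r + s ∧
    ∃ C : Set (Fin (w + 1) → ℕ), C ⊆ lbs w r u ∧
      (∀ v₁ ∈ C, ∀ v₂ ∈ C, v₁ ≠ v₂ → 2 * d ≤ l1dist v₁ v₂) ∧ N = C.ncard }

/-- The duplication distance `d(y₁, y₂)`. -/
noncomputable def distDup (k : ℕ) (y₁ y₂ : List S) : ℕ :=
  sInf {t : ℕ | (DSet k t y₁ ∩ DSet k t y₂).Nonempty}

/-- `N^typ_t(m, n, d)`. -/
noncomputable def NtypD (k t m n d : ℕ) : ℕ :=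
  sSup { N : ℕ | ∃ f : Fin m → List S, (∀ i, f i ∈ typ k n) ∧
    (∀ i j, i ≠ j → d ≤ distDup k (f i) (f j)) ∧
    N = (⋂ i, DSet k t (f i)).ncard }

/-- `A(ν, D, ω)`: the maximum size of a binary code of length `ν`, constant Hamming
weight `ω`, and minimum Hamming distance `D`. -/
noncomputable def Abin (ν D ω : ℕ) : ℕ :=
  sSup { N : ℕ | ∃ C : Set (Fin ν → ZMod 2), (∀ x ∈ C, hammingNorm x = ω) ∧
    (∀ x ∈ C, ∀ y ∈ C, x ≠ y → D ≤ hammingDist x y) ∧ N = C.ncard }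

/-- Zero-run-length representation: `ψ_x(y)` as a list, mapping `φ̄(y)` written as
`0^{u(1)} a₁ 0^{u(2)} … a_w 0^{u(w+1)}` (with the `aᵢ` nonzero) to
`(⌊u(1)/k⌋, …, ⌊u(w+1)/k⌋)`. -/
def psiList (k : ℕ) (y : List S) : List ℕ :=
  ((phiBar k y).splitOnP (fun a => decide (a ≠ 0))).map (fun run => run.length / k)

/-- `ψ_x(y)` as a vector in `ℕ^{w+1}`. -/
def psiVec (k w : ℕ) (y : List S) : Fin (w + 1) → ℕ := fun i => (psiList k y).getD i 0

/-- `s = ⌈log_n m⌉`. -/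
noncomputable def sExp (n m : ℕ) : ℕ := ⌈Real.logb n m⌉₊

/-- The indicator `δ(m, n)` of Theorem 17. -/
noncomputable def deltaTyp (q k n m : ℕ) : ℕ :=
  if ∀ r : ℕ, rTypical q k n r → Nat.choose (r + sExp n m) r < m then 1 else 0

/-- `s = ⌈log_n m⌉ + d - 1`. -/
noncomputable def sExpD (n m d : ℕ) : ℕ := sExp n m + (d - 1)

/-- The indicator `δ(m, n, d)` of Theorem 29. -/
noncomputable def deltaEcc (q k d n m : ℕ) : ℕ :=
  if ∀ r : ℕ, rTypical q k n r → Abin (r + sExpD n m d) (2 * d) (sExpD n m d) < m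
  then 1 else 0


/-- The simplex as a finset. -/
noncomputable def SimpF (w r : ℕ) : Finset (Fin (w + 1) → ℕ) :=
  Finset.piAntidiag Finset.univ r

lemma mem_SimpF {w r : ℕ} {v : Fin (w + 1) → ℕ} : v ∈ SimpF w r ↔ ∑ j, v j = r := by
  simp [SimpF, Finset.mem_piAntidiag]

lemma card_SimpF (w r : ℕ) : (SimpF w r).card = (r + w).choose r := by
  rw [SimpF, ← Finset.map_sym_eq_piAntidiag, Finset.card_map]
  have : (Finset.univ : Finset (Fin (w+1))).sym r = Finset.univ := by
    ext x; simp [Finset.mem_sym_iff]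
  rw [this, ← Fintype.card, Sym.card_sym_eq_choose]
  simp [Fintype.card_fin, Nat.add_comm r w, Nat.add_sub_cancel]

noncomputable def lbsF (w r : ℕ) (u : Fin (w + 1) → ℕ) : Finset (Fin (w + 1) → ℕ) :=
  (SimpF w r).filter (fun v => v ≤ u)

lemma lbs_eq_coe (w r : ℕ) (u : Fin (w + 1) → ℕ) : lbs w r u = ↑(lbsF w r u) := by
  ext v; simp [lbs, lbsF, mem_SimpF, and_comm]

lemma ncard_lbs (w r : ℕ) (u : Fin (w + 1) → ℕ) :
    (lbs w r u).ncard = (lbsF w r u).card := by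
  rw [lbs_eq_coe, Set.ncard_coe_finset]

lemma lbs_finite (w r : ℕ) (u : Fin (w + 1) → ℕ) : (lbs w r u).Finite := by
  rw [lbs_eq_coe]; exact (lbsF w r u).finite_toSet

lemma ncard_lbs_le (w r : ℕ) (u : Fin (w + 1) → ℕ) :
    (lbs w r u).ncard ≤ (r + w).choose r := by
  rw [ncard_lbs, ← card_SimpF w r]
  exact Finset.card_le_card (Finset.filter_subset _ _)

lemma exists_le_sum_eq {n : ℕ} (u : Fin n → ℕ) {r : ℕ} (h : r ≤ ∑ j, u j) :
    ∃ v : Fin n → ℕ, v ≤ u ∧ ∑ j, v j = r := by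
  induction r with
  | zero => exact ⟨0, fun j => Nat.zero_le _, by simp⟩
  | succ r ih =>
    obtain ⟨v, hv, hs⟩ := ih (Nat.le_of_succ_le h)
    have : ∃ j, v j < u j := by
      by_contra hc
      push_neg at hc
      have := Finset.sum_le_sum (fun j (_ : j ∈ Finset.univ) => hc j)
      omega
    obtain ⟨j, hj⟩ := this
    refine ⟨Function.update v j (v j + 1), ?_, ?_⟩
    · intro i
      rcases eq_or_ne i j with rfl | hne
      · simpa using hj
      · simp [Function.update_of_ne hne, hv i]
    · rw [Finset.sum_update_of_mem (Finset.mem_univ j)]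
      rw [← Finset.sum_erase_add _ _ (Finset.mem_univ j)] at hs
      simp only [Finset.sdiff_singleton_eq_erase]
      omega

lemma mu_bddAbove (w r s : ℕ) : BddAbove
    { N : ℕ | ∃ u : Fin (w + 1) → ℕ, (∑ j, u j) = r + s ∧ N = (lbs w r u).ncard } :=
  ⟨(r + w).choose r, by rintro N ⟨u, -, rfl⟩; exact ncard_lbs_le w r u⟩

lemma mu_set_nonempty (w r s : ℕ) :
    { N : ℕ | ∃ u : Fin (w + 1) → ℕ, (∑ j, u j) = r + s ∧ N = (lbs w r u).ncard }.Nonempty := by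
  exact ⟨(lbs w r (fun j => if j = 0 then r + s else 0)).ncard,
    fun j => if j = 0 then r + s else 0, by simp, rfl⟩

lemma le_mu {w r s : ℕ} {u : Fin (w + 1) → ℕ} (h : (∑ j, u j) = r + s) :
    (lbs w r u).ncard ≤ mu w r s :=
  le_csSup (mu_bddAbove w r s) ⟨u, h, rfl⟩

lemma mu_spec (w r s : ℕ) :
    ∃ u : Fin (w + 1) → ℕ, (∑ j, u j) = r + s ∧ (lbs w r u).ncard = mu w r s := by
  obtain ⟨u, hu, hN⟩ := Nat.sSup_mem (mu_set_nonempty w r s) (mu_bddAbove w r s)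
  exact ⟨u, hu, hN.symm⟩

lemma mu_le {w r s m : ℕ}
    (h : ∀ u : Fin (w + 1) → ℕ, (∑ j, u j) = r + s → (lbs w r u).ncard ≤ m) :
    mu w r s ≤ m :=
  csSup_le (mu_set_nonempty w r s) (by rintro N ⟨u, hu, rfl⟩; exact h u hu)

lemma one_le_mu (w r s : ℕ) : 1 ≤ mu w r s := by
  obtain ⟨u, hu, hm⟩ := mu_spec w r s
  rw [← hm]
  obtain ⟨v, hv, hs⟩ := exists_le_sum_eq u (by omega : r ≤ ∑ j, u j)
  have : (lbs w r u).Nonempty := ⟨v, hs, hv⟩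
  rw [Nat.one_le_iff_ne_zero]
  exact (Set.nonempty_iff_ne_empty.mp this) ∘ (Set.ncard_eq_zero (lbs_finite w r u)).mp

lemma mu_lt_mu_succ {w r s : ℕ} (h : s < w * r) : mu w r s < mu w r (s + 1) := by
  obtain ⟨u, hu, hm⟩ := mu_spec w r s
  have hj : ∃ j, u j < r := by
    by_contra hc
    push_neg at hc
    have h1 : (w + 1) * r ≤ ∑ j, u j := by
      calc (w + 1) * r = ∑ _j : Fin (w + 1), r := by
            simp [Finset.sum_const, Finset.card_univ, Nat.mul_comm]
        _ ≤ ∑ j, u j := Finset.sum_le_sum (fun j _ => hc j)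
    nlinarith
  obtain ⟨j, hj⟩ := hj
  set u' : Fin (w + 1) → ℕ := Function.update u j (u j + 1) with hu'
  have hsum' : ∑ i, u' i = r + s + 1 := by
    rw [hu', Finset.sum_update_of_mem (Finset.mem_univ j)]
    rw [← Finset.sum_erase_add _ _ (Finset.mem_univ j)] at hu
    simp only [Finset.sdiff_singleton_eq_erase]
    omega
  -- a new element of lbs u' not in lbs u
  set ubar : Fin (w + 1) → ℕ := Function.update u j 0 with hubar
  have hsbar : ∑ i, ubar i = r + s - u j := by
    rw [hubar, Finset.sum_update_of_mem (Finset.mem_univ j)]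
    rw [← Finset.sum_erase_add _ _ (Finset.mem_univ j)] at hu
    simp only [Finset.sdiff_singleton_eq_erase]
    omega
  obtain ⟨v0, hv0le, hv0s⟩ := exists_le_sum_eq ubar (show r - (u j + 1) ≤ ∑ i, ubar i by omega)
  have hv0j : v0 j = 0 := Nat.le_zero.mp (by simpa [hubar] using hv0le j)
  set v : Fin (w + 1) → ℕ := Function.update v0 j (u j + 1) with hv
  have hvs : ∑ i, v i = r := by
    rw [hv, Finset.sum_update_of_mem (Finset.mem_univ j)]
    rw [← Finset.sum_erase_add _ _ (Finset.mem_univ j)] at hv0s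
    simp only [Finset.sdiff_singleton_eq_erase]
    omega
  have hvmem : v ∈ lbs w r u' := by
    refine ⟨hvs, fun i => ?_⟩
    rcases eq_or_ne i j with rfl | hne
    · simp [hv, hu']
    · simpa [hv, hu', Function.update_of_ne hne] using
        le_trans (hv0le i) (by simp [hubar, Function.update_of_ne hne])
  have hvnot : v ∉ lbs w r u := by
    intro ⟨_, hle⟩
    have := hle j
    simp [hv] at this
  have hss : lbs w r u ⊂ lbs w r u' := by
    constructor
    · rintro x ⟨hxs, hxle⟩
      refine ⟨hxs, fun i => ?_⟩
      rcases eq_or_ne i j with rfl | hne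
      · exact le_trans (hxle i) (by simp [hu'])
      · simpa [hu', Function.update_of_ne hne] using hxle i
    · intro hsub
      exact hvnot (hsub hvmem)
  calc mu w r s = (lbs w r u).ncard := hm.symm
    _ < (lbs w r u').ncard := Set.ncard_lt_ncard hss (lbs_finite w r u')
    _ ≤ mu w r (s + 1) := le_mu (by omega)

lemma mu_strictMonoOn {w r : ℕ} {s s' : ℕ} (h1 : s' < s) (h2 : s ≤ w * r) :
    mu w r s' < mu w r s := by
  induction s with
  | zero => omega
  | succ t ih =>
    rcases Nat.lt_or_ge s' t with hlt | hge
    · exact lt_trans (ih hlt (by omega)) (mu_lt_mu_succ (by omega))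
    · have : s' = t := by omega
      subst this
      exact mu_lt_mu_succ (by omega)


/-- m distinct elements of `lbs` bound its size below. -/
lemma m_le_ncard_lbs {w r m : ℕ} {f : Fin m → (Fin (w + 1) → ℕ)}
    (hf : Function.Injective f) {u : Fin (w + 1) → ℕ} (hmem : ∀ i, f i ∈ lbs w r u) :
    m ≤ (lbs w r u).ncard := by
  have h1 : (Set.range f).ncard = m := by
    rw [← Nat.card_coe_set_eq, Nat.card_range_of_injective hf, Nat.card_eq_fintype_card,
      Fintype.card_fin]
  rw [← h1]
  exact Set.ncard_le_ncard (Set.range_subset_iff.mpr hmem) (lbs_finite w r u)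

/-- enumeration of a finset. -/
lemma enumF {X : Type*} [DecidableEq X] (F : Finset X) :
    ∃ f : Fin F.card → X, Function.Injective f ∧ Finset.univ.image f = F := by
  refine ⟨fun i => (F.equivFin.symm i : X), ?_, ?_⟩
  · exact fun a b h => F.equivFin.symm.injective (Subtype.val_injective h)
  · ext x
    simp only [Finset.mem_image, Finset.mem_univ, true_and]
    constructor
    · rintro ⟨i, rfl⟩; exact (F.equivFin.symm i).2
    · intro hx; exact ⟨F.equivFin ⟨x, hx⟩, by simp⟩

lemma enumF' {X : Type*} [DecidableEq X] (F : Finset X) {m : ℕ} (h : F.card = m) :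
    ∃ f : Fin m → X, Function.Injective f ∧ Finset.univ.image f = F := by
  subst h; exact enumF F

/-- If the image of an injective family is the whole simplex, each coordinate sup is `r`. -/
lemma sup_eq_r {w r m : ℕ} {f : Fin m → (Fin (w + 1) → ℕ)}
    (hsum : ∀ i, ∑ j, f i j = r) (himg : Finset.univ.image f = SimpF w r) (j : Fin (w + 1)) :
    (Finset.univ.sup fun i => f i j) = r := by
  apply le_antisymm
  · apply Finset.sup_le
    intro i _
    rw [← hsum i]
    exact Finset.single_le_sum (fun _ _ => Nat.zero_le _) (Finset.mem_univ j)
  · have hmem : Pi.single j r ∈ SimpF w r := by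
      rw [mem_SimpF, Finset.sum_pi_single']
      simp
    rw [← himg] at hmem
    obtain ⟨i, -, hi⟩ := Finset.mem_image.mp hmem
    calc r = f i j := by rw [hi]; simp
      _ ≤ _ := Finset.le_sup (f := fun i => f i j) (Finset.mem_univ i)


theorem statement6 (w r s : ℕ) :
    (w * r ≤ s →
      mu w r s = Nat.choose (r + w) r ∧ sigma (Nat.choose (r + w) r) w r = w * r) ∧
    (s < w * r → sigma (mu w r s) w r = s) := by
  constructor
  · intro hs
    constructor
    · -- mu = choose
      apply le_antisymm (mu_le (fun u _ => ncard_lbs_le w r u))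
      set u : Fin (w + 1) → ℕ := fun j => if j = 0 then r + (s - w * r) else r with hu
      have husum : ∑ j, u j = r + s := by
        simp only [hu]
        rw [Fin.sum_univ_succ]
        have h2 : ∀ i : Fin w, (if (i.succ : Fin (w+1)) = 0 then r + (s - w * r) else r) = r := by
          intro i; rw [if_neg (Fin.succ_ne_zero i)]
        rw [Finset.sum_congr rfl (fun i _ => h2 i), Finset.sum_const, Finset.card_univ,
          Fintype.card_fin, smul_eq_mul, if_pos rfl]
        have := Nat.mul_comm w r
        omega
      have : (lbs w r u).ncard = (r + w).choose r := by
        rw [ncard_lbs, lbsF, Finset.filter_true_of_mem, card_SimpF]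
        intro v hv j
        have hvj : v j ≤ r := by
          rw [← (mem_SimpF.mp hv)]
          exact Finset.single_le_sum (fun _ _ => Nat.zero_le _) (Finset.mem_univ j)
        have hru : r ≤ u j := by simp only [hu]; split <;> omega
        exact le_trans hvj hru
      rw [← this]
      exact le_mu husum
    · -- sigma (choose) = w * r
      set m := (r + w).choose r with hm
      have key : ∀ s' ∈ { s : ℕ | ∃ u : Fin m → (Fin (w + 1) → ℕ), Function.Injective u ∧
          (∀ i, ∑ j, u i j = r) ∧ (∑ j, Finset.univ.sup fun i => u i j) = r + s },
          s' = w * r := by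
        rintro s' ⟨f, hinj, hsum, hsup⟩
        have himg : Finset.univ.image f = SimpF w r := by
          apply Finset.eq_of_subset_of_card_le
          · intro x hx
            obtain ⟨i, -, rfl⟩ := Finset.mem_image.mp hx
            exact mem_SimpF.mpr (hsum i)
          · rw [card_SimpF, Finset.card_image_of_injective _ hinj, Finset.card_univ,
              Fintype.card_fin]
        rw [Finset.sum_congr rfl (fun j _ => sup_eq_r hsum himg j), Finset.sum_const,
          Finset.card_univ, Fintype.card_fin, smul_eq_mul] at hsup
        have : (w + 1) * r = r + w * r := by ring
        omega
      have hmemwr : w * r ∈ { s : ℕ | ∃ u : Fin m → (Fin (w + 1) → ℕ), Function.Injective u ∧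
          (∀ i, ∑ j, u i j = r) ∧ (∑ j, Finset.univ.sup fun i => u i j) = r + s } := by
        obtain ⟨f, hinj, himg⟩ := enumF' (SimpF w r) (card_SimpF w r)
        have hsum : ∀ i, ∑ j, f i j = r := by
          intro i
          have : f i ∈ SimpF w r := by
            rw [← himg]; exact Finset.mem_image_of_mem f (Finset.mem_univ i)
          exact mem_SimpF.mp this
        refine ⟨f, hinj, hsum, ?_⟩
        rw [Finset.sum_congr rfl (fun j _ => sup_eq_r hsum himg j), Finset.sum_const,
          Finset.card_univ, Fintype.card_fin, smul_eq_mul]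
        ring
      exact le_antisymm (Nat.sInf_le hmemwr)
        (le_csInf ⟨w * r, hmemwr⟩ (fun b hb => le_of_eq (key b hb).symm))
  · -- part 2
    intro hs
    set m := mu w r s with hm
    have hm1 : 1 ≤ m := one_le_mu w r s
    have key : ∀ s' ∈ { t : ℕ | ∃ u : Fin m → (Fin (w + 1) → ℕ), Function.Injective u ∧
        (∀ i, ∑ j, u i j = r) ∧ (∑ j, Finset.univ.sup fun i => u i j) = r + t },
        s ≤ s' := by
      rintro s' ⟨f, hinj, hsum, hsup⟩
      by_contra hlt
      push_neg at hlt
      set U : Fin (w + 1) → ℕ := fun j => Finset.univ.sup fun i => f i j with hU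
      have hmem : ∀ i, f i ∈ lbs w r U :=
        fun i => ⟨hsum i, fun j => Finset.le_sup (f := fun i' => f i' j) (Finset.mem_univ i)⟩
      have h1 : m ≤ (lbs w r U).ncard := m_le_ncard_lbs hinj hmem
      have h2 : (lbs w r U).ncard ≤ mu w r s' := le_mu hsup
      have := mu_strictMonoOn hlt (le_of_lt hs)
      omega
    have hmems : s ∈ { t : ℕ | ∃ u : Fin m → (Fin (w + 1) → ℕ), Function.Injective u ∧
        (∀ i, ∑ j, u i j = r) ∧ (∑ j, Finset.univ.sup fun i => u i j) = r + t } := by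
      obtain ⟨ustar, hustar, hcard⟩ := mu_spec w r s
      have hcard' : (lbsF w r ustar).card = m := by rw [← ncard_lbs, hcard]
      obtain ⟨f, hinj, himg⟩ := enumF' (lbsF w r ustar) hcard'
      have hfmem : ∀ i, f i ∈ lbsF w r ustar := by
        intro i; rw [← himg]; exact Finset.mem_image_of_mem f (Finset.mem_univ i)
      have hsum : ∀ i, ∑ j, f i j = r :=
        fun i => mem_SimpF.mp (Finset.mem_filter.mp (hfmem i)).1
      have hfle : ∀ i, f i ≤ ustar := fun i => (Finset.mem_filter.mp (hfmem i)).2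
      refine ⟨f, hinj, hsum, ?_⟩
      set U : Fin (w + 1) → ℕ := fun j => Finset.univ.sup fun i => f i j with hU
      have hUle : ∀ j, U j ≤ ustar j :=
        fun j => Finset.sup_le (fun i _ => hfle i j)
      have hub : ∑ j, U j ≤ r + s := by
        rw [← hustar]; exact Finset.sum_le_sum (fun j _ => hUle j)
      have hlb : r ≤ ∑ j, U j := by
        have i0 : Fin m := ⟨0, hm1⟩
        calc r = ∑ j, f i0 j := (hsum i0).symm
          _ ≤ ∑ j, U j := Finset.sum_le_sum
            (fun j _ => Finset.le_sup (f := fun i => f i j) (Finset.mem_univ i0))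
      -- let s'' = ∑ U - r; show s'' = s
      set s'' := ∑ j, U j - r with hs''
      have hUsum : ∑ j, U j = r + s'' := by omega
      have hmem : ∀ i, f i ∈ lbs w r U :=
        fun i => ⟨hsum i, fun j => Finset.le_sup (f := fun i' => f i' j) (Finset.mem_univ i)⟩
      have h1 : m ≤ (lbs w r U).ncard := m_le_ncard_lbs hinj hmem
      have h2 : (lbs w r U).ncard ≤ mu w r s'' := le_mu hUsum
      have hnotlt : ¬ s'' < s := by
        intro hlt
        have := mu_strictMonoOn hlt (le_of_lt hs)
        omega
      have : s'' = s := by omega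
      rw [← this, ← hUsum]
    exact le_antisymm (Nat.sInf_le hmems)
      (le_csInf ⟨s, hmems⟩ (fun b hb => key b hb))


end TandemDup
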